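/- Let C be a shortest odd hole of a graph G. If x is a major vertex for C (i.e., N_G(x) ∩ V(C) is not contained in any 2-edge path of C) but x has at most 3 neighbors on C, then x has exactly 3 neighbors on C and the set of neighbors of x on C induces exactly one edge of C. -/

import Mathlib

open SimpleGraph

variable {V : Type*}

def IsHole (G : SimpleGraph V) {v : V} (C : G.Walk v v) : Prop :=
  C.IsCycle ∧ 4 ≤ C.length ∧
    ∀ x y : V, x ∈ C.support → y ∈ C.support → G.Adj x y → s(x, y) ∈ C.edges

def IsShortestOddHole (G : SimpleGraph V) {v : V} (C : G.Walk v v) : Prop :=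
  IsHole G C ∧ Odd C.length ∧
    ∀ (w : V) (D : G.Walk w w), IsHole G D → Odd D.length → C.length ≤ D.length

/-- `x` is a major vertex for the hole `C`: the neighbors of `x` on `C` are not all
contained in a single path of `C` with two edges. -/
def IsMajor (G : SimpleGraph V) {v : V} (C : G.Walk v v) (x : V) : Prop :=
  ¬ ∃ (a b : V) (Q : G.Walk a b), Q.IsPath ∧ Q.length = 2 ∧
      (∀ e ∈ Q.edges, e ∈ C.edges) ∧
      ∀ y, y ∈ C.support → G.Adj x y → y ∈ Q.support


section AuxWalk

variable {G : SimpleGraph V}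

lemma aux_support_eq {u w : V} (p : G.Walk u w) :
    p.support = (List.range (p.length + 1)).map p.getVert := by
  induction p with
  | nil => simp [List.range_succ]
  | cons h q ih =>
    rw [Walk.support_cons, Walk.length_cons]
    conv_rhs => rw [List.range_succ_eq_map, List.map_cons, List.map_map]
    rw [ih]
    rfl

lemma aux_mem_edges_iff {u w : V} (p : G.Walk u w) (e : Sym2 V) :
    e ∈ p.edges ↔ ∃ i, i < p.length ∧ e = s(p.getVert i, p.getVert (i + 1)) := by
  induction p with
  | nil => simp
  | cons h q ih =>
    simp only [Walk.edges_cons, List.mem_cons, ih, Walk.length_cons]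
    constructor
    · rintro (rfl | ⟨i, hi, rfl⟩)
      · exact ⟨0, by omega, by rw [Walk.getVert_zero, Walk.getVert_cons_succ, Walk.getVert_zero]⟩
      · exact ⟨i + 1, by omega, by rw [Walk.getVert_cons_succ, Walk.getVert_cons_succ]⟩
    · rintro ⟨i, hi, rfl⟩
      cases i with
      | zero => left; rw [Walk.getVert_zero, Walk.getVert_cons_succ, Walk.getVert_zero]
      | succ i => right; exact ⟨i, by omega, by rw [Walk.getVert_cons_succ, Walk.getVert_cons_succ]⟩

lemma aux_getVert_injOn {v : V} {C : G.Walk v v} (hc : C.IsCycle)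
    {i j : ℕ} (hi : i < C.length) (hj : j < C.length) (h : C.getVert i = C.getVert j) : i = j := by
  have htail : C.support.tail = (List.range C.length).map (fun k => C.getVert (k + 1)) := by
    rw [aux_support_eq, List.range_succ_eq_map]
    simp only [List.map_cons, List.map_map, List.tail_cons]
    rfl
  have hnd : C.support.tail.Nodup := hc.support_nodup
  rw [htail] at hnd
  have hinj := List.inj_on_of_nodup_map hnd
  have hL : C.getVert ((C.length - 1) + 1) = C.getVert 0 := by
    have h1 : (C.length - 1) + 1 = C.length := by omega
    rw [h1, Walk.getVert_length, Walk.getVert_zero]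
  rcases Nat.eq_zero_or_pos i with rfl | hi0
  · rcases Nat.eq_zero_or_pos j with rfl | hj0
    · rfl
    · exfalso
      have h0 : C.getVert ((C.length - 1) + 1) = C.getVert ((j - 1) + 1) := by
        rw [hL, h]; congr 1; omega
      have := hinj (List.mem_range.mpr (by omega)) (List.mem_range.mpr (by omega)) h0
      omega
  · rcases Nat.eq_zero_or_pos j with rfl | hj0
    · exfalso
      have h0 : C.getVert ((i - 1) + 1) = C.getVert ((C.length - 1) + 1) := by
        rw [hL, ← h]; congr 1; omega
      have := hinj (List.mem_range.mpr (by omega)) (List.mem_range.mpr (by omega)) h0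
      omega
    · have h0 : C.getVert ((i - 1) + 1) = C.getVert ((j - 1) + 1) := by
        have h1 : (i - 1) + 1 = i := by omega
        have h2 : (j - 1) + 1 = j := by omega
        rw [h1, h2, h]
      have := hinj (List.mem_range.mpr (by omega)) (List.mem_range.mpr (by omega)) h0
      omega

end AuxWalk
section AuxCyc

variable {G : SimpleGraph V}

/-- The vertices of a closed walk, indexed cyclically. -/
def cyc {v : V} (C : G.Walk v v) (i : ℕ) : V := C.getVert (i % C.length)

lemma cyc_congr {v : V} (C : G.Walk v v) {i j : ℕ} (h : i % C.length = j % C.length) :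
    cyc C i = cyc C j := by unfold cyc; rw [h]

lemma cyc_add_length {v : V} (C : G.Walk v v) (i : ℕ) : cyc C (i + C.length) = cyc C i :=
  cyc_congr C (Nat.add_mod_right i C.length)

lemma cyc_eq_getVert {v : V} (C : G.Walk v v) {i : ℕ} (h : i ≤ C.length) :
    cyc C i = C.getVert i := by
  rcases eq_or_lt_of_le h with rfl | h'
  · unfold cyc; rw [Nat.mod_self, Walk.getVert_zero, Walk.getVert_length]
  · unfold cyc; rw [Nat.mod_eq_of_lt h']

lemma cyc_succ_mod {i n : ℕ} (h : 1 < n) : (i + 1) % n = (i % n + 1) % n := by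
  conv_lhs => rw [Nat.add_mod]
  rw [Nat.mod_eq_of_lt h]

lemma cyc_adj {v : V} (C : G.Walk v v) (hn : 1 < C.length) (i : ℕ) :
    G.Adj (cyc C i) (cyc C (i + 1)) := by
  unfold cyc
  rw [cyc_succ_mod hn]
  have hmod : i % C.length < C.length := Nat.mod_lt _ (by omega)
  rcases eq_or_lt_of_le (Nat.succ_le_of_lt hmod) with he | hlt
  · have he' : i % C.length + 1 = C.length := he
    rw [he', Nat.mod_self]
    have hadj := C.adj_getVert_succ hmod
    rw [he', Walk.getVert_length] at hadj
    rw [Walk.getVert_zero]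
    exact hadj
  · have hlt' : i % C.length + 1 < C.length := hlt
    rw [Nat.mod_eq_of_lt hlt']
    exact C.adj_getVert_succ hmod

lemma cyc_inj {v : V} {C : G.Walk v v} (hc : C.IsCycle) {i j : ℕ}
    (h : cyc C i = cyc C j) : i % C.length = j % C.length := by
  have hn : 0 < C.length := by have := hc.three_le_length; omega
  exact aux_getVert_injOn hc (Nat.mod_lt _ hn) (Nat.mod_lt _ hn) h

lemma cyc_mem_support {v : V} (C : G.Walk v v) (hn : 0 < C.length) (i : ℕ) :
    cyc C i ∈ C.support :=
  Walk.mem_support_iff_exists_getVert.mpr ⟨i % C.length, rfl, le_of_lt (Nat.mod_lt _ hn)⟩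

lemma mem_support_iff_cyc {v : V} (C : G.Walk v v) (hn : 0 < C.length) (y : V) :
    y ∈ C.support ↔ ∃ i, i < C.length ∧ y = cyc C i := by
  constructor
  · intro h
    obtain ⟨k, hk, hkl⟩ := Walk.mem_support_iff_exists_getVert.mp h
    rcases eq_or_lt_of_le hkl with rfl | h'
    · exact ⟨0, hn, by rw [← hk, cyc_eq_getVert C (Nat.zero_le _), Walk.getVert_zero,
        Walk.getVert_length]⟩
    · exact ⟨k, h', by rw [← hk, cyc_eq_getVert C (le_of_lt h')]⟩
  · rintro ⟨i, _, rfl⟩; exact cyc_mem_support C hn i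

lemma mem_edges_iff_cyc {v : V} (C : G.Walk v v) (e : Sym2 V) :
    e ∈ C.edges ↔ ∃ i, i < C.length ∧ e = s(cyc C i, cyc C (i + 1)) := by
  rw [aux_mem_edges_iff]
  constructor
  · rintro ⟨i, hi, rfl⟩
    exact ⟨i, hi, by rw [cyc_eq_getVert C (le_of_lt hi), cyc_eq_getVert C (by omega)]⟩
  · rintro ⟨i, hi, rfl⟩
    exact ⟨i, hi, by rw [cyc_eq_getVert C (le_of_lt hi), cyc_eq_getVert C (by omega)]⟩

lemma cyc_edge_mem {v : V} (C : G.Walk v v) (hn : 0 < C.length) (i : ℕ) :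
    s(cyc C i, cyc C (i + 1)) ∈ C.edges := by
  rw [mem_edges_iff_cyc]
  refine ⟨i % C.length, Nat.mod_lt _ hn, ?_⟩
  have h1 : cyc C i = cyc C (i % C.length) := cyc_congr C (by simp)
  have h2 : cyc C (i + 1) = cyc C (i % C.length + 1) := cyc_congr C (by
    conv_lhs => rw [Nat.add_mod]
    conv_rhs => rw [Nat.add_mod]
    simp)
  rw [h1, h2]

end AuxCyc
section AuxFwalk

variable {G : SimpleGraph V}

/-- Walk along a function with consecutive adjacencies. -/
def fwalk (f : ℕ → V) (hf : ∀ i, G.Adj (f i) (f (i + 1))) (a : ℕ) :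
    (m : ℕ) → G.Walk (f a) (f (a + m))
  | 0 => Walk.nil
  | (m + 1) => (fwalk f hf a m).concat (hf (a + m))

lemma fwalk_length (f : ℕ → V) (hf : ∀ i, G.Adj (f i) (f (i + 1))) (a m : ℕ) :
    (fwalk f hf a m).length = m := by
  induction m with
  | zero => rfl
  | succ m ih => rw [fwalk, Walk.length_concat, ih]

lemma fwalk_getVert (f : ℕ → V) (hf : ∀ i, G.Adj (f i) (f (i + 1))) (a : ℕ) {m i : ℕ}
    (h : i ≤ m) : (fwalk f hf a m).getVert i = f (a + i) := by
  induction m with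
  | zero => interval_cases i; exact Walk.getVert_zero _
  | succ m ih =>
    rw [fwalk, Walk.concat_eq_append, Walk.getVert_append]
    rcases lt_or_ge i ((fwalk f hf a m).length) with hlt | hge
    · rw [if_pos hlt]
      exact ih (by rw [fwalk_length] at hlt; omega)
    · rw [if_neg (not_lt.mpr hge), fwalk_length] at *
      rcases Nat.eq_or_lt_of_le hge with rfl | h2
      · simp
      · have : i = m + 1 := by omega
        subst this
        have h3 : m + 1 - m = 1 := by omega
        rw [h3]
        rfl

lemma fwalk_mem_support (f : ℕ → V) (hf : ∀ i, G.Adj (f i) (f (i + 1))) (a m : ℕ) (y : V) :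
    y ∈ (fwalk f hf a m).support ↔ ∃ i, i ≤ m ∧ y = f (a + i) := by
  rw [Walk.mem_support_iff_exists_getVert]
  constructor
  · rintro ⟨i, rfl, hi⟩
    rw [fwalk_length] at hi
    exact ⟨i, hi, fwalk_getVert f hf a hi⟩
  · rintro ⟨i, hi, rfl⟩
    exact ⟨i, fwalk_getVert f hf a hi, by rw [fwalk_length]; exact hi⟩

lemma fwalk_support_nodup (f : ℕ → V) (hf : ∀ i, G.Adj (f i) (f (i + 1))) (a m : ℕ)
    (hinj : ∀ i j, i ≤ m → j ≤ m → f (a + i) = f (a + j) → i = j) :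
    (fwalk f hf a m).support.Nodup := by
  rw [aux_support_eq, fwalk_length]
  apply List.Nodup.map_on _ List.nodup_range
  intro i hi j hj hij
  rw [List.mem_range] at hi hj
  rw [fwalk_getVert f hf a (by omega : i ≤ m), fwalk_getVert f hf a (by omega : j ≤ m)] at hij
  exact hinj i j (by omega) (by omega) hij

lemma fwalk_mem_edges (f : ℕ → V) (hf : ∀ i, G.Adj (f i) (f (i + 1))) (a m : ℕ) (e : Sym2 V) :
    e ∈ (fwalk f hf a m).edges ↔ ∃ i, i < m ∧ e = s(f (a + i), f (a + i + 1)) := by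
  rw [aux_mem_edges_iff, fwalk_length]
  constructor
  · rintro ⟨i, hi, rfl⟩
    exact ⟨i, hi, by rw [fwalk_getVert f hf a (by omega : i ≤ m),
      fwalk_getVert f hf a (by omega : i + 1 ≤ m), ← Nat.add_assoc]⟩
  · rintro ⟨i, hi, rfl⟩
    exact ⟨i, hi, by rw [fwalk_getVert f hf a (by omega : i ≤ m),
      fwalk_getVert f hf a (by omega : i + 1 ≤ m), ← Nat.add_assoc]⟩

end AuxFwalk
section AuxGap

variable {G : SimpleGraph V}

lemma aux_mod_le {s n : ℕ} (hs : s ≤ n) (hn : 0 < n) : s % n = s ∨ (s = n ∧ s % n = 0) := by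
  rcases lt_or_eq_of_le hs with h | rfl
  · exact Or.inl (Nat.mod_eq_of_lt h)
  · exact Or.inr ⟨rfl, Nat.mod_self _⟩

lemma gap_even {v : V} {C : G.Walk v v} (hC : IsShortestOddHole G C)
    {x : V} (hx : x ∉ C.support) {a m : ℕ} (h2 : 2 ≤ m) (hlt : m + 2 < C.length)
    (ham : a + m ≤ C.length)
    (hxa : G.Adj x (cyc C a)) (hxb : G.Adj x (cyc C (a + m)))
    (hgap : ∀ i, 0 < i → i < m → ¬ G.Adj x (cyc C (a + i))) :
    Even m := by
  obtain ⟨⟨hcyc, hlen4, hind⟩, hodd, hmin⟩ := hC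
  have hn1 : 1 < C.length := by omega
  have hn0 : 0 < C.length := by omega
  have hf : ∀ i, G.Adj (cyc C i) (cyc C (i + 1)) := cyc_adj C hn1
  by_contra heven
  -- local injectivity of indices on the arc
  have hinj2 : ∀ i j, i ≤ m → j ≤ m → cyc C (a + i) = cyc C (a + j) → i = j := by
    intro i j hi hj hij
    have hm := cyc_inj hcyc hij
    rcases aux_mod_le (by omega : a + i ≤ C.length) hn0 with h | ⟨h, h'⟩ <;>
      rcases aux_mod_le (by omega : a + j ≤ C.length) hn0 with g | ⟨g, g'⟩ <;> omega
  set W := fwalk (cyc C) hf a m with hW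
  have hxb' : G.Adj (cyc C (a + m)) x := hxb.symm
  set D := Walk.cons hxa (W.concat hxb') with hD
  have hDlen : D.length = m + 2 := by
    rw [hD, Walk.length_cons, Walk.length_concat, hW, fwalk_length]
  have hxW : x ∉ W.support := by
    rw [hW, fwalk_mem_support]
    rintro ⟨i, hi, hx'⟩
    exact hx (hx' ▸ cyc_mem_support C hn0 (a + i))
  have hWnodup : W.support.Nodup := fwalk_support_nodup _ hf a m hinj2
  have hDsup : D.support = x :: (W.support ++ [x]) := by
    rw [hD, Walk.support_cons, Walk.support_concat]
  have hDmem : ∀ y, y ∈ D.support ↔ y = x ∨ ∃ i, i ≤ m ∧ y = cyc C (a + i) := by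
    intro y
    rw [hDsup]
    simp only [List.mem_cons, List.mem_append, List.mem_singleton, List.not_mem_nil, or_false]
    rw [hW, fwalk_mem_support]
    constructor
    · rintro (h | h | h)
      exacts [Or.inl h, Or.inr h, Or.inl h]
    · rintro (h | h)
      exacts [Or.inl h, Or.inr (Or.inl h)]
  have hDe : D.edges = s(x, cyc C a) :: (W.edges ++ [s(cyc C (a + m), x)]) := by
    rw [hD, Walk.edges_cons, Walk.edges_concat, List.concat_eq_append]
  have hDedge : ∀ e, e ∈ D.edges ↔ e = s(x, cyc C a) ∨
      (∃ i, i < m ∧ e = s(cyc C (a + i), cyc C (a + i + 1))) ∨ e = s(cyc C (a + m), x) := by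
    intro e
    rw [hDe]
    simp only [List.mem_cons, List.mem_append, List.mem_singleton, List.not_mem_nil, or_false]
    rw [hW, fwalk_mem_edges]
  -- D is a cycle
  have hWe : W.edges.Nodup := Walk.edges_nodup_of_support_nodup hWnodup
  have he0W : s(x, cyc C a) ∉ W.edges := fun h => hxW (W.fst_mem_support_of_mem_edges h)
  have he1W : s(cyc C (a + m), x) ∉ W.edges := fun h => hxW (W.snd_mem_support_of_mem_edges h)
  have he01 : s(x, cyc C a) ≠ s(cyc C (a + m), x) := by
    intro h
    rw [Sym2.eq_iff] at h
    rcases h with ⟨h1, h2⟩ | ⟨h1, h2⟩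
    · exact hx (h1 ▸ cyc_mem_support C hn0 (a + m))
    · have := hinj2 0 m (by omega) (by omega) (by simpa using h2)
      omega
  have hDcyc : D.IsCycle := by
    refine ⟨⟨⟨?_⟩, ?_⟩, ?_⟩
    · rw [hDe]
      refine List.Nodup.cons ?_ (List.Nodup.append hWe (List.nodup_singleton _) ?_)
      · simp only [List.mem_append, List.mem_singleton]
        rintro (h | h)
        · exact he0W h
        · exact he01 h
      · intro e he hme
        rw [List.mem_singleton] at hme
        subst hme
        exact he1W he
    · rw [hD]; exact fun h => by simp at h
    · rw [hDsup]
      simp only [List.tail_cons]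
      refine List.Nodup.append hWnodup (List.nodup_singleton _) ?_
      intro y hy hmy
      rw [List.mem_singleton] at hmy
      subst hmy
      exact hxW hy
  -- D is a hole
  have hDhole : IsHole G D := by
    refine ⟨hDcyc, by omega, ?_⟩
    intro y z hy hz hadj
    rcases (hDmem y).mp hy with rfl | ⟨i, hi, rfl⟩ <;>
      rcases (hDmem z).mp hz with rfl | ⟨j, hj, rfl⟩
    · exact absurd rfl hadj.ne
    · -- x to cyc (a+j)
      rcases Nat.eq_zero_or_pos j with rfl | hj0
      · exact (hDedge _).mpr (Or.inl rfl)
      · rcases eq_or_lt_of_le hj with rfl | hjm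
        · exact (hDedge _).mpr (Or.inr (Or.inr (Sym2.eq_swap)))
        · exact absurd hadj (hgap j hj0 hjm)
    · rcases Nat.eq_zero_or_pos i with rfl | hi0
      · exact (hDedge _).mpr (Or.inl Sym2.eq_swap)
      · rcases eq_or_lt_of_le hi with rfl | him
        · exact (hDedge _).mpr (Or.inr (Or.inr rfl))
        · exact absurd hadj.symm (hgap i hi0 him)
    · -- both on the arc
      have hCe := hind _ _ (cyc_mem_support C hn0 (a + i)) (cyc_mem_support C hn0 (a + j)) hadj
      rw [mem_edges_iff_cyc] at hCe
      obtain ⟨k, hk, heq⟩ := hCe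
      have hkm : k % C.length = k := Nat.mod_eq_of_lt hk
      rw [Sym2.eq_iff] at heq
      rcases heq with ⟨hq1, hq2⟩ | ⟨hq1, hq2⟩
      · have e1 := cyc_inj hcyc hq1
        have e2 := cyc_inj hcyc hq2
        have hji : j = i + 1 := by
          rcases aux_mod_le (by omega : a + i ≤ C.length) hn0 with h | ⟨h, h'⟩ <;>
            rcases aux_mod_le (by omega : a + j ≤ C.length) hn0 with g | ⟨g, g'⟩ <;>
            rcases aux_mod_le (by omega : k + 1 ≤ C.length) hn0 with f | ⟨f, f'⟩ <;> omega
        subst hji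
        exact (hDedge _).mpr (Or.inr (Or.inl ⟨i, by omega, by rw [← Nat.add_assoc]⟩))
      · have e1 := cyc_inj hcyc hq1
        have e2 := cyc_inj hcyc hq2
        have hij : i = j + 1 := by
          rcases aux_mod_le (by omega : a + i ≤ C.length) hn0 with h | ⟨h, h'⟩ <;>
            rcases aux_mod_le (by omega : a + j ≤ C.length) hn0 with g | ⟨g, g'⟩ <;>
            rcases aux_mod_le (by omega : k + 1 ≤ C.length) hn0 with f | ⟨f, f'⟩ <;> omega
        subst hij
        refine (hDedge _).mpr (Or.inr (Or.inl ⟨j, by omega, ?_⟩))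
        rw [← Nat.add_assoc]
        exact Sym2.eq_swap.symm
  have hDodd : Odd D.length := by
    rw [hDlen, Nat.odd_iff]
    rw [Nat.even_iff] at heven
    omega
  have := hmin x D hDhole hDodd
  omega

end AuxGap
section AuxCover

variable {G : SimpleGraph V}

lemma mod_eq_close {s t n : ℕ} (h : s % n = t % n) (hd : s ≤ t) (h2 : t - s < n) : s = t := by
  have hdvd : n ∣ t - s := (Nat.modEq_iff_dvd' hd).mp h
  have h3 : t - s = 0 ∨ n ≤ t - s := by
    rcases Nat.eq_zero_or_pos (t - s) with h' | h'
    · exact Or.inl h'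
    · exact Or.inr (Nat.le_of_dvd h' hdvd)
  omega

lemma cover_not_major {v : V} {C : G.Walk v v} (hC : IsHole G C) {x : V} (c : ℕ)
    (hcov : ∀ y, y ∈ C.support → G.Adj x y →
      y = cyc C (c + C.length - 1) ∨ y = cyc C c ∨ y = cyc C (c + 1)) :
    ¬ IsMajor G C x := by
  obtain ⟨hcyc, hlen4, hind⟩ := hC
  have hn1 : 1 < C.length := by omega
  have hf := cyc_adj C hn1
  intro hmaj
  apply hmaj
  refine ⟨_, _, fwalk (cyc C) hf (c + C.length - 1) 2, ?_, ?_, ?_, ?_⟩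
  · rw [Walk.isPath_def]
    apply fwalk_support_nodup
    intro i j hi hj hij
    have hm := cyc_inj hcyc hij
    rcases le_total i j with h | h
    · have := mod_eq_close hm (by omega) (by omega)
      omega
    · have := mod_eq_close hm.symm (by omega) (by omega)
      omega
  · exact fwalk_length _ _ _ _
  · intro e he
    rw [fwalk_mem_edges] at he
    obtain ⟨i, _, rfl⟩ := he
    exact cyc_edge_mem C (by omega) _
  · intro y hy hadj
    rw [fwalk_mem_support]
    rcases hcov y hy hadj with h | h | h
    · exact ⟨0, by omega, by rw [Nat.add_zero]; exact h⟩
    · refine ⟨1, by omega, ?_⟩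
      have h1 : c + C.length - 1 + 1 = c + C.length := by omega
      rw [h1, cyc_add_length]
      exact h
    · refine ⟨2, by omega, ?_⟩
      have h1 : c + C.length - 1 + 2 = (c + 1) + C.length := by omega
      rw [h1, cyc_add_length]
      exact h

lemma not_major_of_mem_support {v : V} {C : G.Walk v v} (hC : IsHole G C) {x : V}
    (hx : x ∈ C.support) : ¬ IsMajor G C x := by
  have hlen4 := hC.2.1
  have hcyc := hC.1
  have hind := hC.2.2
  have hn1 : 1 < C.length := by omega
  obtain ⟨c, hc, hcl⟩ := (mem_support_iff_cyc C (by omega) x).mp hx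
  apply cover_not_major hC c
  intro y hy hadj
  have he := hind x y hx hy hadj
  rw [mem_edges_iff_cyc] at he
  obtain ⟨k, hk, heq⟩ := he
  rw [Sym2.eq_iff] at heq
  rcases heq with ⟨h1, h2⟩ | ⟨h1, h2⟩
  · right; right
    rw [h2]
    apply cyc_congr
    have e := cyc_inj hcyc (hcl.symm.trans h1)
    rw [cyc_succ_mod hn1, ← e, ← cyc_succ_mod hn1]
  · left
    rw [h2]
    apply cyc_congr
    have e := cyc_inj hcyc (h1.symm.trans hcl)
    calc k % C.length = (k + C.length) % C.length := (Nat.add_mod_right k C.length).symm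
      _ = ((k + 1) + (C.length - 1)) % C.length := by congr 1; omega
      _ = ((k + 1) % C.length + (C.length - 1) % C.length) % C.length := Nat.add_mod _ _ _
      _ = (c % C.length + (C.length - 1) % C.length) % C.length := by rw [e]
      _ = (c + (C.length - 1)) % C.length := (Nat.add_mod _ _ _).symm
      _ = (c + C.length - 1) % C.length := by congr 1; omega

end AuxCover
section AuxMain

variable {G : SimpleGraph V}

set_option maxHeartbeats 1600000 in
lemma stmt1_base {v : V} {C : G.Walk v v} (hC : IsShortestOddHole G C) {x : V}
    (hmaj : IsMajor G C x) (hx0 : G.Adj x (cyc C 0))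
    (hcard : {y | y ∈ C.support ∧ G.Adj x y}.ncard ≤ 3) :
    {y | y ∈ C.support ∧ G.Adj x y}.ncard = 3 ∧
      ∃! e : Sym2 V, e ∈ C.edges ∧ ∀ y ∈ e, G.Adj x y := by
  obtain ⟨⟨hcyc, hlen4, hind⟩, hodd, hmin⟩ := id hC
  set n := C.length with hn
  have hn0 : 0 < n := by omega
  have hn1 : 1 < n := by omega
  have hn5 : 5 ≤ n := by
    obtain ⟨k, hk⟩ := hodd
    omega
  have hx : x ∉ C.support := fun h => not_major_of_mem_support ⟨hcyc, hlen4, hind⟩ h hmaj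
  set S : Set ℕ := {i | i < n ∧ G.Adj x (cyc C i)} with hS
  have hSfin : S.Finite := (Set.finite_Iio n).subset fun i hi => hi.1
  have hNS : {y | y ∈ C.support ∧ G.Adj x y} = cyc C '' S := by
    ext y
    simp only [Set.mem_setOf_eq, Set.mem_image]
    constructor
    · rintro ⟨hy, hadj⟩
      obtain ⟨i, hi, rfl⟩ := (mem_support_iff_cyc C hn0 y).mp hy
      exact ⟨i, ⟨hi, hadj⟩, rfl⟩
    · rintro ⟨i, ⟨hi, hadj⟩, rfl⟩
      exact ⟨cyc_mem_support C hn0 i, hadj⟩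
  have hinjS : Set.InjOn (cyc C) S := by
    intro i hi j hj hij
    have h := cyc_inj hcyc hij
    rwa [Nat.mod_eq_of_lt hi.1, Nat.mod_eq_of_lt hj.1] at h
  have hNcard : {y | y ∈ C.support ∧ G.Adj x y}.ncard = S.ncard := by
    rw [hNS, Set.ncard_image_of_injOn hinjS]
  rw [hNcard] at hcard ⊢
  have h0S : 0 ∈ S := ⟨hn0, hx0⟩
  have hcov_of : ∀ c : ℕ, (∀ i ∈ S, cyc C i = cyc C (c + n - 1) ∨ cyc C i = cyc C c ∨
      cyc C i = cyc C (c + 1)) → False := by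
    intro c hc
    refine cover_not_major ⟨hcyc, hlen4, hind⟩ c ?_ hmaj
    intro y hy hadj
    obtain ⟨i, hi, rfl⟩ := (mem_support_iff_cyc C hn0 y).mp hy
    exact hc i ⟨hi, hadj⟩
  have hwrap : ∀ i : ℕ, cyc C (i + n) = cyc C i := cyc_add_length C
  have hScard1 : S.ncard ≠ 1 := by
    intro h1
    obtain ⟨a, hSa⟩ := Set.ncard_eq_one.mp h1
    have ha : a = 0 := by
      have := h0S
      rw [hSa] at this
      simpa using this.symm
    subst ha
    apply hcov_of 0
    intro i hi
    rw [hSa] at hi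
    simp only [Set.mem_singleton_iff] at hi
    subst hi
    exact Or.inr (Or.inl rfl)
  have hScard2 : S.ncard ≠ 2 := by
    intro h2
    obtain ⟨p, q, hpq, hSeq⟩ := Set.ncard_eq_two.mp h2
    obtain ⟨j, hj0, hSeq2⟩ : ∃ j, j ≠ 0 ∧ S = ({0, j} : Set ℕ) := by
      have h0 : 0 = p ∨ 0 = q := by
        rw [hSeq] at h0S
        simpa using h0S
      rcases h0 with rfl | rfl
      · exact ⟨q, fun h => hpq h.symm, hSeq⟩
      · refine ⟨p, fun h => hpq h, ?_⟩
        rw [hSeq]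
        ext t
        simp only [Set.mem_insert_iff, Set.mem_singleton_iff]
        tauto
    have hmemS : ∀ i, i ∈ S ↔ i = 0 ∨ i = j := by
      intro i
      rw [hSeq2]
      simp
    have hjS : j ∈ S := (hmemS j).mpr (Or.inr rfl)
    have hjn : j < n := hjS.1
    have hadjj : G.Adj x (cyc C j) := hjS.2
    rcases le_or_gt j 2 with hj2 | hj3
    · apply hcov_of 1
      intro i hi
      rcases (hmemS i).mp hi with h | h
      · rw [h]
        left
        rw [show 1 + n - 1 = 0 + n by omega, hwrap]
      · rw [h]
        rcases (by omega : j = 1 ∨ j = 2) with hj | hj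
        · rw [hj]
          exact Or.inr (Or.inl rfl)
        · rw [hj]
          exact Or.inr (Or.inr rfl)
    rcases le_or_gt (n - j) 2 with hnj2 | hnj3
    · apply hcov_of (j + 1)
      intro i hi
      rcases (hmemS i).mp hi with h | h <;> rw [h]
      · rcases (by omega : j + 1 = n ∨ j + 2 = n) with he | he
        · refine Or.inr (Or.inl ?_)
          rw [show j + 1 = 0 + n by omega, hwrap]
        · refine Or.inr (Or.inr ?_)
          rw [show j + 1 + 1 = 0 + n by omega, hwrap]
      · left
        rw [show j + 1 + n - 1 = j + n by omega, hwrap]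
    · have hev1 : Even j := by
        refine gap_even hC hx (a := 0) (m := j) (by omega) (by omega) (by omega) hx0 (by simpa using hadjj) ?_
        intro i hi0 hij hadj
        have hiS : (0 + i) ∈ S := ⟨by omega, hadj⟩
        rcases (hmemS _).mp hiS with h | h <;> omega
      have hev2 : Even (n - j) := by
        refine gap_even hC hx (a := j) (m := n - j) (by omega) (by omega) (by omega) hadjj ?_ ?_
        · rw [show j + (n - j) = 0 + n by omega, hwrap]
          exact hx0
        · intro i hi0 hij hadj
          have hiS : (j + i) ∈ S := ⟨by omega, hadj⟩
          rcases (hmemS _).mp hiS with h | h <;> omega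
      rw [Nat.even_iff] at hev1 hev2
      rw [Nat.odd_iff] at hodd
      omega
  have h1le : S.ncard ≠ 0 := by
    intro h0
    rw [Set.ncard_eq_zero hSfin] at h0
    rw [h0] at h0S
    exact h0S
  have hcard3 : S.ncard = 3 := by omega
  refine ⟨hcard3, ?_⟩
  -- find the ordered description of S
  obtain ⟨p, q, r, hpq, hpr, hqr, hSeq⟩ := Set.ncard_eq_three.mp hcard3
  obtain ⟨j, l, hj0, hjl, hSeq3⟩ : ∃ j l, 0 < j ∧ j < l ∧ S = ({0, j, l} : Set ℕ) := by
    have h0 : 0 = p ∨ 0 = q ∨ 0 = r := by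
      rw [hSeq] at h0S
      simpa using h0S
    have hperm : ∀ a b : ℕ, a ≠ b → ({a, b} : Set ℕ) = {b, a} := by
      intro a b _
      ext t
      simp only [Set.mem_insert_iff, Set.mem_singleton_iff]
      tauto
    rcases h0 with rfl | rfl | rfl
    · rcases le_total q r with h | h
      · exact ⟨q, r, by omega, by omega, hSeq⟩
      · refine ⟨r, q, by omega, by omega, ?_⟩
        rw [hSeq, hperm q r hqr]
    · rcases le_total p r with h | h
      · refine ⟨p, r, by omega, by omega, ?_⟩
        rw [hSeq]
        ext t
        simp only [Set.mem_insert_iff, Set.mem_singleton_iff]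
        tauto
      · refine ⟨r, p, by omega, by omega, ?_⟩
        rw [hSeq]
        ext t
        simp only [Set.mem_insert_iff, Set.mem_singleton_iff]
        tauto
    · rcases le_total p q with h | h
      · refine ⟨p, q, by omega, by omega, ?_⟩
        rw [hSeq]
        ext t
        simp only [Set.mem_insert_iff, Set.mem_singleton_iff]
        tauto
      · refine ⟨q, p, by omega, by omega, ?_⟩
        rw [hSeq]
        ext t
        simp only [Set.mem_insert_iff, Set.mem_singleton_iff]
        tauto
  have hmemS : ∀ i, i ∈ S ↔ i = 0 ∨ i = j ∨ i = l := by
    intro i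
    rw [hSeq3]
    simp
  have hlS : l ∈ S := (hmemS l).mpr (Or.inr (Or.inr rfl))
  have hjS : j ∈ S := (hmemS j).mpr (Or.inr (Or.inl rfl))
  have hln : l < n := hlS.1
  have hadjj : G.Adj x (cyc C j) := hjS.2
  have hadjl : G.Adj x (cyc C l) := hlS.2
  -- exclusions: no two adjacent arcs both of length 1
  have hE1 : ¬(j = 1 ∧ l - j = 1) := by
    rintro ⟨rfl, hl⟩
    have hl2 : l = 2 := by omega
    subst hl2
    apply hcov_of 1
    intro i hi
    rcases (hmemS i).mp hi with h | h | h <;> rw [h]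
    · left
      rw [show 1 + n - 1 = 0 + n by omega, hwrap]
    · exact Or.inr (Or.inl rfl)
    · exact Or.inr (Or.inr rfl)
  have hE2 : ¬(l - j = 1 ∧ n - l = 1) := by
    rintro ⟨hl, hnl⟩
    apply hcov_of l
    intro i hi
    rcases (hmemS i).mp hi with h | h | h <;> rw [h]
    · refine Or.inr (Or.inr ?_)
      rw [show l + 1 = 0 + n by omega, hwrap]
    · left
      rw [show l + n - 1 = j + n by omega, hwrap]
    · exact Or.inr (Or.inl rfl)
  have hE3 : ¬(n - l = 1 ∧ j = 1) := by
    rintro ⟨hnl, rfl⟩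
    apply hcov_of 0
    intro i hi
    rcases (hmemS i).mp hi with h | h | h <;> rw [h]
    · exact Or.inr (Or.inl rfl)
    · exact Or.inr (Or.inr rfl)
    · left
      rw [show 0 + n - 1 = l by omega]
  -- gap parity for arcs of length at least 2
  have hev1 : 2 ≤ j → Even j := by
    intro h2j
    have hj3 : j + 2 < n := by
      by_contra hc
      exact hE2 ⟨by omega, by omega⟩
    refine gap_even hC hx (a := 0) (m := j) (by omega) (by omega) (by omega) hx0 (by simpa using hadjj) ?_
    intro i hi0 hij hadj
    have hiS : (0 + i) ∈ S := ⟨by omega, hadj⟩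
    rcases (hmemS _).mp hiS with h | h | h <;> omega
  have hev2 : 2 ≤ l - j → Even (l - j) := by
    intro h2
    have h3 : (l - j) + 2 < n := by
      by_contra hc
      exact hE3 ⟨by omega, by omega⟩
    refine gap_even hC hx (a := j) (m := l - j) (by omega) (by omega) (by omega) hadjj ?_ ?_
    · rw [show j + (l - j) = l by omega]
      exact hadjl
    · intro i hi0 hij hadj
      have hiS : (j + i) ∈ S := ⟨by omega, hadj⟩
      rcases (hmemS _).mp hiS with h | h | h <;> omega
  have hev3 : 2 ≤ n - l → Even (n - l) := by
    intro h2
    have h3 : (n - l) + 2 < n := by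
      by_contra hc
      exact hE1 ⟨by omega, by omega⟩
    refine gap_even hC hx (a := l) (m := n - l) (by omega) (by omega) (by omega) hadjl ?_ ?_
    · rw [show l + (n - l) = 0 + n by omega, hwrap]
      exact hx0
    · intro i hi0 hij hadj
      have hiS : (l + i) ∈ S := ⟨by omega, hadj⟩
      rcases (hmemS _).mp hiS with h | h | h <;> omega
  -- exactly one arc of length 1
  have a1 : j = 1 ∨ j % 2 = 0 := by
    rcases (by omega : j = 1 ∨ 2 ≤ j) with h | h
    · exact Or.inl h
    · exact Or.inr (Nat.even_iff.mp (hev1 h))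
  have a2 : l - j = 1 ∨ (l - j) % 2 = 0 := by
    rcases (by omega : l - j = 1 ∨ 2 ≤ l - j) with h | h
    · exact Or.inl h
    · exact Or.inr (Nat.even_iff.mp (hev2 h))
  have a3 : n - l = 1 ∨ (n - l) % 2 = 0 := by
    rcases (by omega : n - l = 1 ∨ 2 ≤ n - l) with h | h
    · exact Or.inl h
    · exact Or.inr (Nat.even_iff.mp (hev3 h))
  have hoddn : n % 2 = 1 := Nat.odd_iff.mp hodd
  have honearc : (j = 1 ∧ l - j ≠ 1 ∧ n - l ≠ 1) ∨ (j ≠ 1 ∧ l - j = 1 ∧ n - l ≠ 1) ∨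
      (j ≠ 1 ∧ l - j ≠ 1 ∧ n - l = 1) := by
    have hne1 : ¬(j = 1 ∧ l - j = 1) := hE1
    have hne2 : ¬(l - j = 1 ∧ n - l = 1) := hE2
    have hne3 : ¬(n - l = 1 ∧ j = 1) := fun h => hE3 h
    rcases a1 with h1 | h1 <;> rcases a2 with h2 | h2 <;> rcases a3 with h3 | h3 <;> omega
  -- the unique edge extraction helper
  have hedge_extract : ∀ e : Sym2 V, e ∈ C.edges → (∀ y ∈ e, G.Adj x y) →
      ∃ k, k < n ∧ k ∈ S ∧ ((k + 1) % n) ∈ S ∧ e = s(cyc C k, cyc C (k + 1)) := by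
    intro e he hadj
    rw [mem_edges_iff_cyc] at he
    obtain ⟨k, hk, rfl⟩ := he
    have h1 : G.Adj x (cyc C k) := hadj _ (Sym2.mem_mk_left _ _)
    have h2 : G.Adj x (cyc C (k + 1)) := hadj _ (Sym2.mem_mk_right _ _)
    refine ⟨k, hk, ⟨hk, h1⟩, ⟨Nat.mod_lt _ hn0, ?_⟩, rfl⟩
    have : cyc C ((k + 1) % n) = cyc C (k + 1) := cyc_congr C (by simp [hn])
    rw [this]
    exact h2
  rcases honearc with ⟨h1, h2, h3⟩ | ⟨h1, h2, h3⟩ | ⟨h1, h2, h3⟩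
  · -- arc between 0 and j = 1
    subst h1
    refine ⟨s(cyc C 0, cyc C 1), ⟨cyc_edge_mem C hn0 0, ?_⟩, ?_⟩
    · intro y hy
      rcases Sym2.mem_iff.mp hy with rfl | rfl
      · exact hx0
      · exact hadjj
    · rintro e ⟨he, hae⟩
      obtain ⟨k, hk, hkS, hk1S, rfl⟩ := hedge_extract e he hae
      rcases (hmemS k).mp hkS with hk0 | hk0 | hk0
      · rw [hk0]
      · exfalso
        rcases aux_mod_le (by omega : k + 1 ≤ n) hn0 with hm | ⟨hm, hm'⟩ <;>
          rcases (hmemS _).mp hk1S with h | h | h <;> omega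
      · exfalso
        rcases aux_mod_le (by omega : k + 1 ≤ n) hn0 with hm | ⟨hm, hm'⟩ <;>
          rcases (hmemS _).mp hk1S with h | h | h <;> omega
  · -- arc between j and l = j + 1
    have hlj : l = j + 1 := by omega
    refine ⟨s(cyc C j, cyc C (j + 1)), ⟨cyc_edge_mem C hn0 j, ?_⟩, ?_⟩
    · intro y hy
      rcases Sym2.mem_iff.mp hy with rfl | rfl
      · exact hadjj
      · rw [← hlj]
        exact hadjl
    · rintro e ⟨he, hae⟩
      obtain ⟨k, hk, hkS, hk1S, rfl⟩ := hedge_extract e he hae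
      rcases (hmemS k).mp hkS with hk0 | hk0 | hk0
      · exfalso
        rcases aux_mod_le (by omega : k + 1 ≤ n) hn0 with hm | ⟨hm, hm'⟩ <;>
          rcases (hmemS _).mp hk1S with h | h | h <;> omega
      · rw [hk0]
      · exfalso
        rcases aux_mod_le (by omega : k + 1 ≤ n) hn0 with hm | ⟨hm, hm'⟩ <;>
          rcases (hmemS _).mp hk1S with h | h | h <;> omega
  · -- arc between l and n (wrap), n - l = 1
    refine ⟨s(cyc C l, cyc C (l + 1)), ⟨cyc_edge_mem C hn0 l, ?_⟩, ?_⟩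
    · intro y hy
      rcases Sym2.mem_iff.mp hy with rfl | rfl
      · exact hadjl
      · rw [show l + 1 = 0 + n by omega, hwrap]
        exact hx0
    · rintro e ⟨he, hae⟩
      obtain ⟨k, hk, hkS, hk1S, rfl⟩ := hedge_extract e he hae
      rcases (hmemS k).mp hkS with hk0 | hk0 | hk0
      · exfalso
        rcases aux_mod_le (by omega : k + 1 ≤ n) hn0 with hm | ⟨hm, hm'⟩ <;>
          rcases (hmemS _).mp hk1S with h | h | h <;> omega
      · exfalso
        rcases aux_mod_le (by omega : k + 1 ≤ n) hn0 with hm | ⟨hm, hm'⟩ <;>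
          rcases (hmemS _).mp hk1S with h | h | h <;> omega
      · rw [hk0]

end AuxMain

section AuxFinal

variable {G : SimpleGraph V}

lemma closed_mem_support_iff_tail {v : V} (C : G.Walk v v) (hn : 0 < C.length) (y : V) :
    y ∈ C.support ↔ y ∈ C.support.tail := by
  constructor
  · intro h
    rw [Walk.support_eq_cons] at h
    rcases List.mem_cons.mp h with rfl | h
    · have htail : C.support.tail = (List.range C.length).map (fun k => C.getVert (k + 1)) := by
        rw [aux_support_eq, List.range_succ_eq_map]
        simp only [List.map_cons, List.map_map, List.tail_cons]
        rfl
      rw [htail]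
      refine List.mem_map.mpr ⟨C.length - 1, List.mem_range.mpr (by omega), ?_⟩
      rw [show C.length - 1 + 1 = C.length by omega, Walk.getVert_length]
    · exact h
  · exact List.mem_of_mem_tail

end AuxFinal

/-- A major vertex with at most 3 neighbors on a shortest odd hole `C` has exactly 3
neighbors on `C`, and the neighbors of `x` on `C` induce exactly one edge of `C`. -/
theorem stmt1 (G : SimpleGraph V) {v : V} (C : G.Walk v v)
    (hC : IsShortestOddHole G C) (x : V) (hmaj : IsMajor G C x)
    (hcard : {y | y ∈ C.support ∧ G.Adj x y}.ncard ≤ 3) :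
    {y | y ∈ C.support ∧ G.Adj x y}.ncard = 3 ∧
      ∃! e : Sym2 V, e ∈ C.edges ∧ ∀ y ∈ e, G.Adj x y := by
  classical
  have hhole := hC.1
  have hn0 : 0 < C.length := by have := hhole.1.three_le_length; omega
  by_cases hex : ∃ y, y ∈ C.support ∧ G.Adj x y
  · obtain ⟨u, hu, hux⟩ := hex
    set C' := C.rotate u hu with hC'
    have hlen' : C'.length = C.length := by
      have h1 := congrArg Walk.length (C.take_spec hu)
      rw [Walk.length_append] at h1
      have h2 : C'.length = (C.dropUntil u hu).length + (C.takeUntil u hu).length :=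
        Walk.length_append _ _
      omega
    have hn0' : 0 < C'.length := by omega
    have hsup' : ∀ y, (y ∈ C'.support ↔ y ∈ C.support) := by
      intro y
      rw [closed_mem_support_iff_tail C' hn0' y, closed_mem_support_iff_tail C hn0 y]
      exact (C.support_rotate u hu).perm.mem_iff
    have hedg' : ∀ e, (e ∈ C'.edges ↔ e ∈ C.edges) := fun e =>
      (C.rotate_edges u hu).perm.mem_iff
    have hhole' : IsShortestOddHole G C' := by
      obtain ⟨⟨hcyc, hl4, hind⟩, hodd, hmin⟩ := hC
      refine ⟨⟨hcyc.rotate hu, by omega, ?_⟩, by rw [hlen']; exact hodd, ?_⟩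
      · intro a b ha hb hadj
        rw [hedg']
        exact hind a b ((hsup' a).mp ha) ((hsup' b).mp hb) hadj
      · intro w D hD hDodd
        rw [hlen']
        exact hmin w D hD hDodd
    have hmaj' : IsMajor G C' x := by
      rintro ⟨a, b, Q, hQ1, hQ2, hQ3, hQ4⟩
      exact hmaj ⟨a, b, Q, hQ1, hQ2, fun e he => (hedg' e).mp (hQ3 e he),
        fun y hy hadj => hQ4 y ((hsup' y).mpr hy) hadj⟩
    have hset : {y | y ∈ C'.support ∧ G.Adj x y} = {y | y ∈ C.support ∧ G.Adj x y} := by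
      ext y
      simp only [Set.mem_setOf_eq]
      rw [hsup']
    have hx0' : G.Adj x (cyc C' 0) := by
      have h : cyc C' 0 = u := by
        unfold cyc
        rw [Nat.zero_mod, Walk.getVert_zero]
      rw [h]
      exact hux
    obtain ⟨h1, h2⟩ := stmt1_base hhole' hmaj' hx0' (by rw [hset]; exact hcard)
    constructor
    · rw [← hset]
      exact h1
    · obtain ⟨e, ⟨he1, he2⟩, huq⟩ := h2
      exact ⟨e, ⟨(hedg' e).mp he1, he2⟩, fun e' he' => huq e' ⟨(hedg' e').mpr he'.1, he'.2⟩⟩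
  · exfalso
    refine cover_not_major hhole 0 ?_ hmaj
    intro y hy hadj
    exact (hex ⟨y, hy, hadj⟩).elim
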